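/- The map sending a history in the complete history sDAG on labels Y to its associated internally labeled tree (dropping ρ and its outgoing edge and labeling each node (ℓ,U) by ℓ), and the map sending an internally labeled tree t with labels in Y to the history (V_t,E_t) (where each node w is sent to v_w = (φ(w), {C_{w'} : w' a child of w}), with C_{w'} the set of leaf labels below w'), are mutually inverse up to label-preserving isomorphism of labeled trees. In particular, these maps give a bijective correspondence between histories in the complete history sDAG on labels Y and isomorphism classes of internally labeled trees with labels in Y. -/

import Mathlib

universe u v

/-- A node of a history sDAG: either the universal ancestor (UA) node `ρ`,
or a node carrying a label `ℓ : Y` and a subpartition `U : Set (Set Y)`. -/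
inductive HNode (Y : Type u) : Type u
  | ua : HNode Y
  | node : Y → Set (Set Y) → HNode Y

namespace HistorySDAGs

variable {Y : Type u}

/-- `U ∈ Part(Y)`: `U` is a set of pairwise disjoint nonempty (finite) clades with `|U| ≠ 1`. -/
def IsPart (U : Set (Set Y)) : Prop :=
  (∀ C ∈ U, C ≠ ∅) ∧
  (∀ C₁ ∈ U, ∀ C₂ ∈ U, C₁ ≠ C₂ → Disjoint C₁ C₂) ∧
  (∀ C, U ≠ {C}) ∧
  U.Finite ∧ ∀ C ∈ U, C.Finite

open Classical in
/-- The clade union of a node. -/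
noncomputable def cladeUnion : HNode Y → Set Y
  | HNode.ua => ∅
  | HNode.node ℓ U => if U = ∅ then {ℓ} else ⋃₀ U

/-- Reachability via directed edges in `E`. -/
def Reach (E : Set (HNode Y × HNode Y)) (a b : HNode Y) : Prop :=
  Relation.ReflTransGen (fun x y => (x, y) ∈ E) a b

/-- `(V, E)` is a history sDAG on labels `Y`. -/
structure IsHSDAG (V : Set (HNode Y)) (E : Set (HNode Y × HNode Y)) : Prop where
  ua_mem : HNode.ua ∈ V
  valid : ∀ ℓ U, HNode.node ℓ U ∈ V → IsPart U
  edge_mem : ∀ e ∈ E, e.1 ∈ V ∧ e.2 ∈ V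
  reach_ua : ∀ v ∈ V, Reach E HNode.ua v
  no_in_ua : ∀ v : HNode Y, (v, HNode.ua) ∉ E
  edge_clade : ∀ ℓ U v, (HNode.node ℓ U, v) ∈ E → cladeUnion v ∈ U
  clade_cov : ∀ ℓ U, HNode.node ℓ U ∈ V → ∀ C ∈ U,
      ∃ v, (HNode.node ℓ U, v) ∈ E ∧ cladeUnion v = C

/-- Every node-clade pair of `V` has exactly one descendant edge in `E`. -/
def UniqueDesc (V : Set (HNode Y)) (E : Set (HNode Y × HNode Y)) : Prop :=
  ∀ ℓ U, HNode.node ℓ U ∈ V → ∀ C ∈ U,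
    ∃! vc, (HNode.node ℓ U, vc) ∈ E ∧ cladeUnion vc = C

/-- `(V, E)` is a history: a history sDAG in which `ρ` has exactly one child and
each node-clade pair has exactly one descendant edge. -/
def IsHistory (V : Set (HNode Y)) (E : Set (HNode Y × HNode Y)) : Prop :=
  IsHSDAG V E ∧ (∃! v, (HNode.ua, v) ∈ E) ∧ UniqueDesc V E

/-- `(Vs, Es)` is a subhistory of `(V, E)` with root node `vr`. -/
structure IsSubhistoryRooted (V : Set (HNode Y)) (E : Set (HNode Y × HNode Y))
    (Vs : Set (HNode Y)) (Es : Set (HNode Y × HNode Y)) (vr : HNode Y) : Prop where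
  subV : Vs ⊆ V
  subE : Es ⊆ E
  ua_not_mem : HNode.ua ∉ Vs
  edge_mem : ∀ e ∈ Es, e.1 ∈ Vs ∧ e.2 ∈ Vs
  root_mem : vr ∈ Vs
  reach_root : ∀ v ∈ Vs, Reach Es vr v
  unique_desc : ∀ ℓ U, HNode.node ℓ U ∈ Vs → ∀ C ∈ U,
      ∃! vc, (HNode.node ℓ U, vc) ∈ Es ∧ cladeUnion vc = C

/-- `(Vs, Es)` is a subhistory of `(V, E)`. -/
def IsSubhistory (V : Set (HNode Y)) (E : Set (HNode Y × HNode Y))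
    (Vs : Set (HNode Y)) (Es : Set (HNode Y × HNode Y)) : Prop :=
  ∃ vr, IsSubhistoryRooted V E Vs Es vr

/-- `(Vt, Et)` is a history in (a trim of) the history sDAG `(V, E)`. -/
def HistoryIn (V : Set (HNode Y)) (E : Set (HNode Y × HNode Y))
    (Vt : Set (HNode Y)) (Et : Set (HNode Y × HNode Y)) : Prop :=
  Vt ⊆ V ∧ Et ⊆ E ∧ IsHistory Vt Et

/-- The set of labels of leaf nodes in a node set. -/
def leafLabels (Vt : Set (HNode Y)) : Set Y := {ℓ | HNode.node ℓ ∅ ∈ Vt}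

/-- A candidate history/graph: a pair of a node set and an edge set. -/
abbrev Hist (Y : Type u) := Set (HNode Y) × Set (HNode Y × HNode Y)

/-- The node set of the history sDAG constructed from the collection `T`. -/
def unionV (T : Set (Hist Y)) : Set (HNode Y) := ⋃ t ∈ T, t.1

/-- The edge set of the history sDAG constructed from the collection `T`. -/
def unionE (T : Set (Hist Y)) : Set (HNode Y × HNode Y) := ⋃ t ∈ T, t.2

/-- The node set of the complete history sDAG on labels `Y`. -/
def completeV (Y : Type u) : Set (HNode Y) :=
  {v | v = HNode.ua ∨ ∃ ℓ U, v = HNode.node ℓ U ∧ IsPart U}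

/-- The edge set of the complete history sDAG on labels `Y`. -/
def completeE (Y : Type u) : Set (HNode Y × HNode Y) :=
  {e | e.1 ∈ completeV Y ∧ e.2 ∈ completeV Y ∧ e.2 ≠ HNode.ua ∧
    (e.1 = HNode.ua ∨ ∃ ℓ U, e.1 = HNode.node ℓ U ∧ cladeUnion e.2 ∈ U)}

variable {W : Type v}

/-- The weight `g_f` of a subgraph with edge set `Es`: the sum of `f` over all edges. -/
noncomputable def gweight [AddCommMonoid W] (f : HNode Y × HNode Y → W)
    (Es : Set (HNode Y × HNode Y)) : W := ∑ᶠ e ∈ Es, f e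

/-- The order is total on the subset `S` of `W`. -/
def TotalOn [PartialOrder W] (S : Set W) : Prop := ∀ a ∈ S, ∀ b ∈ S, a ≤ b ∨ b ≤ a

/-- The order respects addition on the subset `S` of `W`. -/
def RespectsAdd [AddCommMonoid W] [PartialOrder W] (S : Set W) : Prop :=
  ∀ a ∈ S, ∀ b ∈ S, ∀ c : W, a < b ↔ a + c < b + c

/-- Weights of subhistories of `(V, E)` rooted at `v`. -/
def subWeights [AddCommMonoid W] (f : HNode Y × HNode Y → W)
    (V : Set (HNode Y)) (E : Set (HNode Y × HNode Y)) (v : HNode Y) : Set W :=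
  {w | ∃ Vs Es, IsSubhistoryRooted V E Vs Es v ∧ w = gweight f Es}

/-- Weights of augmented subhistories below the node-clade pair `(v, C)`. -/
def augWeights [AddCommMonoid W] (f : HNode Y × HNode Y → W)
    (V : Set (HNode Y)) (E : Set (HNode Y × HNode Y)) (v : HNode Y) (C : Set Y) : Set W :=
  {w | ∃ vc Vs Es, (v, vc) ∈ E ∧ cladeUnion vc = C ∧ IsSubhistoryRooted V E Vs Es vc ∧
    w = gweight f (insert (v, vc) Es)}

/-- Weights of histories in `(V, E)`. -/
def historyWeights [AddCommMonoid W] (f : HNode Y × HNode Y → W)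
    (V : Set (HNode Y)) (E : Set (HNode Y × HNode Y)) : Set W :=
  {w | ∃ Vt Et, HistoryIn V E Vt Et ∧ w = gweight f Et}

/-- `W` is clade-ordered with respect to `f` and `(V, E)`. -/
def CladeOrdered [AddCommMonoid W] [PartialOrder W] (f : HNode Y × HNode Y → W)
    (V : Set (HNode Y)) (E : Set (HNode Y × HNode Y)) : Prop :=
  (∀ v ∈ V, v ≠ HNode.ua →
      TotalOn (subWeights f V E v) ∧ RespectsAdd (subWeights f V E v)) ∧
  (∀ ℓ U, HNode.node ℓ U ∈ V → ∀ C ∈ U,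
      TotalOn (augWeights f V E (HNode.node ℓ U) C) ∧
      RespectsAdd (augWeights f V E (HNode.node ℓ U) C)) ∧
  TotalOn (historyWeights f V E)

/-- The minimum-weight histories in `(V, E)` with respect to `g_f`. -/
def minHistories [AddCommMonoid W] [PartialOrder W] (f : HNode Y × HNode Y → W)
    (V : Set (HNode Y)) (E : Set (HNode Y × HNode Y)) : Set (Hist Y) :=
  {t | HistoryIn V E t.1 t.2 ∧
    ∀ t' : Hist Y, HistoryIn V E t'.1 t'.2 → gweight f t.2 ≤ gweight f t'.2}

open Classical in
/-- The map `q` collapsing the edge `(vp, vc)`, sending both `vp` and `vc` to `vp'`. -/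
noncomputable def collapseMap (vp vc vp' : HNode Y) (v : HNode Y) : HNode Y :=
  if v = vp ∨ v = vc then vp' else v

/-- The history obtained by collapsing the edge `(vp, vc)` (into `vp'`) in `t`. -/
noncomputable def collapseEdgeHist (vp vc vp' : HNode Y) (t : Hist Y) : Hist Y :=
  (collapseMap vp vc vp' '' t.1,
   (fun e : HNode Y × HNode Y => (collapseMap vp vc vp' e.1, collapseMap vp vc vp' e.2)) ''
     (t.2 \ {(vp, vc)}))

/-- The new parent node `(ℓ_p, (U_p ∪ U_c) \ {CU(v_c)})` formed when collapsing an edge. -/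
noncomputable def newParent : HNode Y → HNode Y → HNode Y
  | HNode.node ℓp Up, HNode.node ℓc Uc =>
      HNode.node ℓp ((Up ∪ Uc) \ {cladeUnion (HNode.node ℓc Uc)})
  | v, _ => v

/-- `t'` results from `t` by collapsing one label-collapsible edge. -/
def LabelCollapseStep (t t' : Hist Y) : Prop :=
  ∃ ℓ Up Uc, (HNode.node ℓ Up, HNode.node ℓ Uc) ∈ t.2 ∧ Uc ≠ ∅ ∧
    t' = collapseEdgeHist (HNode.node ℓ Up) (HNode.node ℓ Uc)
        (newParent (HNode.node ℓ Up) (HNode.node ℓ Uc)) t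

/-- `t` is label-collapsed: it has no label-collapsible edge. -/
def LabelCollapsed (t : Hist Y) : Prop :=
  ∀ ℓ Up Uc, (HNode.node ℓ Up, HNode.node ℓ Uc) ∈ t.2 → Uc = ∅

/-- `(vp, vc)` is a label-collapsible edge of `G`. -/
def LabelCollapsibleEdge (G : Hist Y) (vp vc : HNode Y) : Prop :=
  (vp, vc) ∈ G.2 ∧ ∃ ℓ Up Uc, vp = HNode.node ℓ Up ∧ vc = HNode.node ℓ Uc ∧ Uc ≠ ∅

/-- `T` is a label-collapsible edge cover of `G`. -/
def LabelCollapsibleEdgeCover (G : Hist Y) (T : Set (Hist Y)) : Prop :=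
  (∀ t ∈ T, HistoryIn G.1 G.2 t.1 t.2) ∧
  (∀ e ∈ G.2, ∃ t ∈ T, e ∈ t.2) ∧
  (∀ vp vc, LabelCollapsibleEdge G vp vc →
    ∀ Vs Es, IsSubhistory G.1 G.2 Vs Es → (vp, vc) ∈ Es →
      ∃ t ∈ T, Vs ⊆ t.1 ∧ Es ⊆ t.2)

open Classical in
/-- Collapsing the edge `(vp, vc)` in the history sDAG `G`, via `E⁺`, `R`, `E⁻`, `E'`, `V'`. -/
noncomputable def collapseDAGEdge (vp vc : HNode Y) (G : Hist Y) : Hist Y :=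
  let vp' := newParent vp vc
  let Eplus : Set (HNode Y × HNode Y) :=
    (G.2 ∪ {e | ∃ v, e = (v, vp') ∧ (v, vp) ∈ G.2}
        ∪ {e | ∃ v, e = (vp', v) ∧ (vp, v) ∈ G.2 ∧ cladeUnion v ≠ cladeUnion vc}
        ∪ {e | ∃ v, e = (vp', v) ∧ (vc, v) ∈ G.2}) \ {(vp, vc)}
  let R : Set (HNode Y × HNode Y) :=
    if ∃ v, (vp, v) ∈ Eplus ∧ cladeUnion v = cladeUnion vc then ∅
    else {e ∈ Eplus | e.2 = vp}
  let Eminus := Eplus \ R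
  let E' := {e ∈ Eminus | Reach Eminus HNode.ua e.1}
  ({v | ∃ e ∈ E', v = e.1 ∨ v = e.2}, E')

/-- `t'` is obtained from `t` by a subhistory swap, replacing a subhistory of `t` by a
conforming subhistory of some history in `S`. -/
def SwapStepUsing (S : Set (Hist Y)) (t t' : Hist Y) : Prop :=
  ∃ t₂ ∈ S, ∃ Vs' Es' vr' vp,
    IsSubhistoryRooted t₂.1 t₂.2 Vs' Es' vr' ∧ (vp, vr') ∈ t₂.2 ∧
    ∃ Vs Es vr, IsSubhistoryRooted t.1 t.2 Vs Es vr ∧ (vp, vr) ∈ t.2 ∧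
      leafLabels Vs = leafLabels Vs' ∧
      t' = ((t.1 \ Vs) ∪ Vs', (t.2 \ (Es ∪ {(vp, vr)})) ∪ (Es' ∪ {(vp, vr')}))

/-- Leaves of an abstract rooted graph. -/
def IsLeafIn {α : Type v} (nodes : Set α) (edges : Set (α × α)) (x : α) : Prop :=
  x ∈ nodes ∧ ∀ c, (x, c) ∉ edges

/-- Reachability via directed edges in an abstract graph. -/
def GReach {α : Type v} (edges : Set (α × α)) (a b : α) : Prop :=
  Relation.ReflTransGen (fun x y => (x, y) ∈ edges) a b

/-- An (internally) labeled tree: a rooted multifurcating tree with no unifurcations,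
with node labels in `Y` that are injective on leaves. -/
structure IsLabeledTree {α : Type v} (nodes : Set α) (edges : Set (α × α))
    (root : α) (lab : α → Y) : Prop where
  root_mem : root ∈ nodes
  edge_mem : ∀ e ∈ edges, e.1 ∈ nodes ∧ e.2 ∈ nodes
  reach_root : ∀ x ∈ nodes, GReach edges root x
  unique_parent : ∀ x a b, (a, x) ∈ edges → (b, x) ∈ edges → a = b
  no_parent_root : ∀ a, (a, root) ∉ edges
  acyclic : ∀ x, ¬ Relation.TransGen (fun a b => (a, b) ∈ edges) x x
  no_unif : ∀ x ∈ nodes, ¬ (∃! c, (x, c) ∈ edges)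
  leaf_inj : ∀ x y, IsLeafIn nodes edges x → IsLeafIn nodes edges y → lab x = lab y → x = y
  finite : nodes.Finite

/-- The set `C_w` of leaf labels below a node `w` of an abstract labeled tree. -/
def leavesBelow {α : Type v} (nodes : Set α) (edges : Set (α × α)) (lab : α → Y) (w : α) :
    Set Y :=
  {y | ∃ u, IsLeafIn nodes edges u ∧ GReach edges w u ∧ y = lab u}

/-- The history sDAG node `v_w` associated to a node `w` of a labeled tree. -/
def treeNodeOf {α : Type v} (nodes : Set α) (edges : Set (α × α)) (lab : α → Y) (w : α) :
    HNode Y :=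
  HNode.node (lab w) {C | ∃ w', (w, w') ∈ edges ∧ C = leavesBelow nodes edges lab w'}

/-- The node set `V_t` of the history associated to a labeled tree. -/
def treeToHistV {α : Type v} (nodes : Set α) (edges : Set (α × α)) (lab : α → Y) :
    Set (HNode Y) :=
  insert HNode.ua (treeNodeOf nodes edges lab '' nodes)

/-- The edge set `E_t` of the history associated to a labeled tree. -/
def treeToHistE {α : Type v} (nodes : Set α) (edges : Set (α × α)) (root : α) (lab : α → Y) :
    Set (HNode Y × HNode Y) :=
  insert (HNode.ua, treeNodeOf nodes edges lab root)
    {e | ∃ w₁ w₂, (w₁, w₂) ∈ edges ∧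
      e = (treeNodeOf nodes edges lab w₁, treeNodeOf nodes edges lab w₂)}



section CorrespondenceAux

lemma node_ne_ua (ℓ : Y) (U : Set (Set Y)) : HNode.node ℓ U ≠ HNode.ua :=
  fun h => by cases h

open Classical in
lemma cu_node (ℓ : Y) (U : Set (Set Y)) :
    cladeUnion (HNode.node ℓ U) = if U = ∅ then {ℓ} else ⋃₀ U := rfl

lemma cu_node_empty (ℓ : Y) : cladeUnion (HNode.node ℓ (∅ : Set (Set Y))) = {ℓ} := by
  rw [cu_node]; simp

lemma cu_node_ne (ℓ : Y) {U : Set (Set Y)} (h : U ≠ ∅) :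
    cladeUnion (HNode.node ℓ U) = ⋃₀ U := by
  rw [cu_node, if_neg h]

lemma isPart_two {U : Set (Set Y)} (hU : IsPart U) {C : Set Y} (hC : C ∈ U) :
    ∃ C' ∈ U, C' ≠ C := by
  by_contra h
  push_neg at h
  exact hU.2.2.1 C (Set.eq_singleton_iff_unique_mem.mpr ⟨hC, h⟩)

lemma cu_finite {U : Set (Set Y)} (ℓ : Y) (hU : IsPart U) :
    (cladeUnion (HNode.node ℓ U)).Finite := by
  by_cases h : U = ∅
  · subst h; rw [cu_node_empty]; exact Set.finite_singleton ℓ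
  · rw [cu_node_ne ℓ h]; exact Set.Finite.sUnion hU.2.2.2.1 hU.2.2.2.2

lemma part1 (lab' : HNode Y → Y) (hlab' : ∀ ℓ U, lab' (HNode.node ℓ U) = ℓ)
    (Vt : Set (HNode Y)) (Et : Set (HNode Y × HNode Y)) (r : HNode Y)
    (hH : IsHistory Vt Et) (hr : (HNode.ua, r) ∈ Et) :
    treeToHistV (Vt \ {HNode.ua}) (Et \ {(HNode.ua, r)}) lab' = Vt ∧
    treeToHistE (Vt \ {HNode.ua}) (Et \ {(HNode.ua, r)}) r lab' = Et := by
  obtain ⟨hS, hUA, hUD⟩ := hH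
  have hrV : r ∈ Vt := (hS.edge_mem _ hr).2
  have hrne : r ≠ HNode.ua := fun h => hS.no_in_ua HNode.ua (h ▸ hr)
  have hEsub : (Et \ {(HNode.ua, r)}) ⊆ Et := Set.diff_subset
  have hE'mem : ∀ {a b : HNode Y}, (a, b) ∈ Et → a ≠ HNode.ua →
      (a, b) ∈ Et \ {(HNode.ua, r)} := by
    intro a b hab ha
    refine ⟨hab, ?_⟩
    simp only [Set.mem_singleton_iff, Prod.mk.injEq, not_and]
    intro h; exact absurd h ha
  have tgt_ne : ∀ {a b : HNode Y}, (a, b) ∈ Et → b ≠ HNode.ua := by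
    intro a b hab hb
    exact hS.no_in_ua a (hb ▸ hab)
  -- leaves of the stripped graph are exactly nodes with empty subpartition
  have leaf_char : ∀ {u : HNode Y}, IsLeafIn (Vt \ {HNode.ua}) (Et \ {(HNode.ua, r)}) u →
      ∃ ℓu, u = HNode.node ℓu ∅ := by
    intro u hu
    obtain ⟨⟨huV, hune⟩, hnoc⟩ := hu
    cases u with
    | ua => exact absurd rfl hune
    | node ℓu Uu =>
      refine ⟨ℓu, ?_⟩
      by_cases hUu : Uu = ∅
      · rw [hUu]
      · obtain ⟨C, hC⟩ := Set.nonempty_iff_ne_empty.mpr hUu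
        obtain ⟨w, hw, _⟩ := hS.clade_cov ℓu Uu huV C hC
        exact absurd (hE'mem hw (node_ne_ua _ _)) (hnoc w)
  -- clade union decreases along paths
  have cu_mono : ∀ {v u : HNode Y}, v ≠ HNode.ua → GReach (Et \ {(HNode.ua, r)}) v u →
      u ≠ HNode.ua ∧ cladeUnion u ⊆ cladeUnion v := by
    intro v u hv hreach
    induction hreach with
    | refl => exact ⟨hv, subset_rfl⟩
    | @tail m x _ he ih =>
      obtain ⟨hmne, hsub⟩ := ih
      have hmx : (m, x) ∈ Et := hEsub he
      refine ⟨tgt_ne hmx, ?_⟩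
      cases m with
      | ua => exact absurd rfl hmne
      | node ℓm Um =>
        have hcx := hS.edge_clade ℓm Um x hmx
        have hUm : Um ≠ ∅ := fun h => by rw [h] at hcx; exact hcx
        calc cladeUnion x ⊆ ⋃₀ Um := Set.subset_sUnion_of_mem hcx
          _ = cladeUnion (HNode.node ℓm Um) := (cu_node_ne _ hUm).symm
          _ ⊆ cladeUnion v := hsub
  -- key: leaves below = clade union
  have lb_eq : ∀ v ∈ Vt, v ≠ HNode.ua →
      leavesBelow (Vt \ {HNode.ua}) (Et \ {(HNode.ua, r)}) lab' v = cladeUnion v := by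
    have main : ∀ n : ℕ, ∀ v ∈ Vt, v ≠ HNode.ua → (cladeUnion v).ncard ≤ n →
        cladeUnion v ⊆ leavesBelow (Vt \ {HNode.ua}) (Et \ {(HNode.ua, r)}) lab' v := by
      intro n
      induction n with
      | zero =>
        intro v hv hvne hcard y hy
        cases v with
        | ua => exact absurd rfl hvne
        | node ℓ U =>
          have hfin := cu_finite ℓ (hS.valid _ _ hv)
          rw [Nat.le_zero, Set.ncard_eq_zero hfin] at hcard
          rw [hcard] at hy
          exact absurd hy (Set.notMem_empty y)
      | succ n ih =>
        intro v hv hvne hcard y hy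
        cases v with
        | ua => exact absurd rfl hvne
        | node ℓ U =>
          have hU := hS.valid _ _ hv
          by_cases hUe : U = ∅
          · subst hUe
            rw [cu_node_empty, Set.mem_singleton_iff] at hy
            subst hy
            refine ⟨HNode.node y ∅, ⟨⟨hv, node_ne_ua y ∅⟩, ?_⟩,
              Relation.ReflTransGen.refl, (hlab' y ∅).symm⟩
            intro c hc
            have := hS.edge_clade y ∅ c (hEsub hc)
            exact this
          · rw [cu_node_ne ℓ hUe] at hy
            obtain ⟨C, hCU, hyC⟩ := hy
            obtain ⟨w, hw, hcw⟩ := hS.clade_cov ℓ U hv C hCU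
            have hwV : w ∈ Vt := (hS.edge_mem _ hw).2
            have hwne : w ≠ HNode.ua := tgt_ne hw
            obtain ⟨C', hC'U, hC'ne⟩ := isPart_two hU hCU
            obtain ⟨z, hz⟩ := Set.nonempty_iff_ne_empty.mpr (hU.1 C' hC'U)
            have hdis := hU.2.1 C' hC'U C hCU hC'ne
            have hss : cladeUnion w ⊂ cladeUnion (HNode.node ℓ U) := by
              rw [hcw, cu_node_ne ℓ hUe]
              refine Set.ssubset_iff_subset_ne.mpr ⟨Set.subset_sUnion_of_mem hCU, ?_⟩
              intro h
              exact Set.disjoint_left.mp hdis hz (by rw [h]; exact ⟨C', hC'U, hz⟩)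
            have hfin := cu_finite ℓ (hS.valid _ _ hv)
            have hlt := Set.ncard_lt_ncard hss hfin
            have hwcard : (cladeUnion w).ncard ≤ n := by omega
            have hyw : y ∈ leavesBelow (Vt \ {HNode.ua}) (Et \ {(HNode.ua, r)}) lab' w :=
              ih w hwV hwne hwcard (by rw [hcw]; exact hyC)
            obtain ⟨u, hu, hru, hyu⟩ := hyw
            exact ⟨u, hu, Relation.ReflTransGen.head (hE'mem hw (node_ne_ua ℓ U)) hru, hyu⟩
    intro v hv hvne
    apply Set.Subset.antisymm
    · rintro y ⟨u, hu, hru, rfl⟩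
      obtain ⟨ℓu, rfl⟩ := leaf_char hu
      apply (cu_mono hvne hru).2
      rw [hlab', cu_node_empty]
      exact rfl
    · exact main (cladeUnion v).ncard v hv hvne le_rfl
  -- treeNodeOf is the identity on non-UA nodes of the history
  have tno_eq : ∀ v ∈ Vt, v ≠ HNode.ua →
      treeNodeOf (Vt \ {HNode.ua}) (Et \ {(HNode.ua, r)}) lab' v = v := by
    intro v hv hvne
    cases v with
    | ua => exact absurd rfl hvne
    | node ℓ U =>
      unfold treeNodeOf
      rw [hlab']
      congr 1
      ext C
      constructor
      · rintro ⟨w', he, rfl⟩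
        have heEt : (HNode.node ℓ U, w') ∈ Et := hEsub he
        rw [lb_eq w' (hS.edge_mem _ heEt).2 (tgt_ne heEt)]
        exact hS.edge_clade _ _ _ heEt
      · intro hC
        obtain ⟨w, hw, hcw⟩ := hS.clade_cov ℓ U hv C hC
        refine ⟨w, hE'mem hw (node_ne_ua _ _), ?_⟩
        rw [lb_eq w (hS.edge_mem _ hw).2 (tgt_ne hw)]
        exact hcw.symm
  constructor
  · ext v
    simp only [treeToHistV, Set.mem_insert_iff, Set.mem_image, Set.mem_diff,
      Set.mem_singleton_iff]
    constructor
    · rintro (rfl | ⟨w, ⟨hwV, hwne⟩, rfl⟩)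
      · exact hS.ua_mem
      · rw [tno_eq w hwV hwne]; exact hwV
    · intro hv
      by_cases hvu : v = HNode.ua
      · exact Or.inl hvu
      · exact Or.inr ⟨v, ⟨hv, hvu⟩, tno_eq v hv hvu⟩
  · have hrtno : treeNodeOf (Vt \ {HNode.ua}) (Et \ {(HNode.ua, r)}) lab' r = r :=
      tno_eq r hrV hrne
    obtain ⟨c, hc, huniq⟩ := hUA
    ext ⟨a, b⟩
    simp only [treeToHistE, Set.mem_insert_iff, Set.mem_setOf_eq]
    constructor
    · rintro (h | ⟨w₁, w₂, hw, heq⟩)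
      · rw [hrtno] at h
        rw [h]; exact hr
      · have h1 : (w₁, w₂) ∈ Et := hEsub hw
        have h1ne : w₁ ≠ HNode.ua := by
          intro h; subst h
          have hw2 : w₂ = c := huniq w₂ h1
          have hrc : r = c := huniq r hr
          apply hw.2
          have hw2r : w₂ = r := hw2.trans hrc.symm
          simp [Set.mem_singleton_iff, hw2r]
        rw [tno_eq w₁ (hS.edge_mem _ h1).1 h1ne, tno_eq w₂ (hS.edge_mem _ h1).2 (tgt_ne h1)]
          at heq
        rw [heq]; exact h1
    · intro he
      by_cases h1 : a = HNode.ua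
      · subst h1
        left
        have hb : b = c := huniq b he
        have hrc : r = c := huniq r hr
        rw [hrtno, hb, hrc]
      · right
        exact ⟨a, b, hE'mem he h1,
          by rw [tno_eq a (hS.edge_mem _ he).1 h1, tno_eq b (hS.edge_mem _ he).2 (tgt_ne he)]⟩

lemma part2 {α : Type v} (lab' : HNode Y → Y) (hlab' : ∀ ℓ U, lab' (HNode.node ℓ U) = ℓ)
    (nodes : Set α) (edges : Set (α × α)) (root : α) (lab : α → Y)
    (hT : IsLabeledTree nodes edges root lab) :
    HistoryIn (completeV Y) (completeE Y)
      (treeToHistV nodes edges lab) (treeToHistE nodes edges root lab) ∧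
    ∃ h : α → HNode Y,
      Set.BijOn h nodes (treeToHistV nodes edges lab \ {HNode.ua}) ∧
      (∀ w ∈ nodes, lab' (h w) = lab w) ∧
      {e ∈ treeToHistE nodes edges root lab | e.1 ≠ HNode.ua} =
        {e | ∃ a b, (a, b) ∈ edges ∧ e = (h a, h b)} := by
  -- every node has a leaf below it
  have h_leaf_ex : ∀ w ∈ nodes, ∃ u, IsLeafIn nodes edges u ∧ GReach edges w u := by
    have main : ∀ n : ℕ, ∀ w ∈ nodes, ({x ∈ nodes | GReach edges w x}).ncard ≤ n →
        ∃ u, IsLeafIn nodes edges u ∧ GReach edges w u := by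
      intro n
      induction n with
      | zero =>
        intro w hw hcard
        exfalso
        have hfin : ({x ∈ nodes | GReach edges w x}).Finite :=
          hT.finite.subset (fun x hx => hx.1)
        rw [Nat.le_zero, Set.ncard_eq_zero hfin] at hcard
        have hmem : w ∈ ({x ∈ nodes | GReach edges w x}) := ⟨hw, Relation.ReflTransGen.refl⟩
        rw [hcard] at hmem
        exact hmem
      | succ n ih =>
        intro w hw hcard
        by_cases hleaf : ∀ c, (w, c) ∉ edges
        · exact ⟨w, ⟨hw, hleaf⟩, Relation.ReflTransGen.refl⟩
        · push_neg at hleaf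
          obtain ⟨c, hc⟩ := hleaf
          have hcn : c ∈ nodes := (hT.edge_mem _ hc).2
          have hss : {x ∈ nodes | GReach edges c x} ⊂ {x ∈ nodes | GReach edges w x} := by
            refine Set.ssubset_iff_subset_ne.mpr ⟨?_, ?_⟩
            · rintro x ⟨hxn, hxr⟩
              exact ⟨hxn, Relation.ReflTransGen.head hc hxr⟩
            · intro h
              have hwmem : w ∈ {x ∈ nodes | GReach edges c x} := by
                rw [h]; exact ⟨hw, Relation.ReflTransGen.refl⟩
              exact hT.acyclic w (Relation.TransGen.head' hc hwmem.2)
          have hfin : ({x ∈ nodes | GReach edges w x}).Finite :=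
            hT.finite.subset (fun x hx => hx.1)
          have hlt := Set.ncard_lt_ncard hss hfin
          obtain ⟨u, hu, hru⟩ := ih c hcn (by omega)
          exact ⟨u, hu, Relation.ReflTransGen.head hc hru⟩
    intro w hw
    exact main _ w hw le_rfl
  have h_lb_ne : ∀ w ∈ nodes, (leavesBelow nodes edges lab w).Nonempty := by
    intro w hw
    obtain ⟨u, hu, hru⟩ := h_leaf_ex w hw
    exact ⟨lab u, u, hu, hru, rfl⟩
  -- two nodes above a common node are comparable
  have h_comp : ∀ {a x : α}, GReach edges a x → ∀ b, GReach edges b x →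
      GReach edges a b ∨ GReach edges b a := by
    intro a x hax
    induction hax with
    | refl => intro b hb; exact Or.inr hb
    | @tail m x' hm he ih =>
      intro b hbx
      rcases Relation.ReflTransGen.cases_tail hbx with heq | ⟨q, hbq, hqx⟩
      · subst heq; exact Or.inl (hm.tail he)
      · rw [hT.unique_parent _ _ _ hqx he] at hbq
        exact ih b hbq
  have h_nrs : ∀ {w c1 c2 : α}, (w, c1) ∈ edges → (w, c2) ∈ edges → c1 ≠ c2 →
      ¬ GReach edges c1 c2 := by
    intro w c1 c2 h1 h2 hne h
    rcases Relation.ReflTransGen.cases_tail h with heq | ⟨q, hq, hqc⟩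
    · exact hne heq.symm
    · rw [hT.unique_parent _ _ _ hqc h2] at hq
      exact hT.acyclic c1 (Relation.TransGen.tail' hq h1)
  have h_sib_disj : ∀ {w c1 c2 : α}, (w, c1) ∈ edges → (w, c2) ∈ edges → c1 ≠ c2 →
      Disjoint (leavesBelow nodes edges lab c1) (leavesBelow nodes edges lab c2) := by
    intro w c1 c2 h1 h2 hne
    rw [Set.disjoint_left]
    rintro y ⟨u1, hu1, hr1, rfl⟩ ⟨u2, hu2, hr2, hlabeq⟩
    have hu12 : u2 = u1 := hT.leaf_inj u2 u1 hu2 hu1 hlabeq.symm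
    subst hu12
    rcases h_comp hr1 c2 hr2 with h | h
    · exact h_nrs h1 h2 hne h
    · exact h_nrs h2 h1 hne.symm h
  have h_lb_mono : ∀ {a b : α}, GReach edges a b →
      leavesBelow nodes edges lab b ⊆ leavesBelow nodes edges lab a := by
    rintro a b hab y ⟨u, hu, hr, rfl⟩
    exact ⟨u, hu, hab.trans hr, rfl⟩
  have h_two : ∀ {w c : α}, w ∈ nodes → (w, c) ∈ edges → ∃ c', (w, c') ∈ edges ∧ c' ≠ c := by
    intro w c hw hc
    by_contra hcon
    push_neg at hcon
    exact hT.no_unif w hw ⟨c, hc, fun y hy => hcon y hy⟩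
  have h_isPart : ∀ w ∈ nodes,
      IsPart {C | ∃ w', (w, w') ∈ edges ∧ C = leavesBelow nodes edges lab w'} := by
    intro w hw
    refine ⟨?_, ?_, ?_, ?_, ?_⟩
    · rintro C ⟨w', hw', rfl⟩
      exact Set.nonempty_iff_ne_empty.mp (h_lb_ne w' (hT.edge_mem _ hw').2)
    · rintro C₁ ⟨c1, hc1, rfl⟩ C₂ ⟨c2, hc2, rfl⟩ hne
      have hcne : c1 ≠ c2 := fun h => hne (by rw [h])
      exact h_sib_disj hc1 hc2 hcne
    · intro C hC
      have hCmem : C ∈ ({C} : Set (Set Y)) := rfl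
      rw [← hC] at hCmem
      obtain ⟨c, hc, hCeq⟩ := hCmem
      obtain ⟨c', hc', hcne⟩ := h_two hw hc
      have h1 : leavesBelow nodes edges lab c' ∈ ({C} : Set (Set Y)) := by
        rw [← hC]; exact ⟨c', hc', rfl⟩
      have h3 : leavesBelow nodes edges lab c' = leavesBelow nodes edges lab c :=
        (Set.mem_singleton_iff.mp h1).trans hCeq
      have hd := h_sib_disj hc' hc hcne
      rw [h3] at hd
      obtain ⟨y, hy⟩ := h_lb_ne c (hT.edge_mem _ hc).2
      exact Set.disjoint_left.mp hd hy hy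
    · have himg : {C | ∃ w', (w, w') ∈ edges ∧ C = leavesBelow nodes edges lab w'} =
          (leavesBelow nodes edges lab) '' {w' | (w, w') ∈ edges} := by
        ext C
        constructor
        · rintro ⟨w', h, rfl⟩; exact ⟨w', h, rfl⟩
        · rintro ⟨w', h, rfl⟩; exact ⟨w', h, rfl⟩
      rw [himg]
      exact (hT.finite.subset (fun x hx => (hT.edge_mem _ hx).2)).image _
    · rintro C ⟨w', hw', rfl⟩
      apply (hT.finite.image lab).subset
      rintro y ⟨u, hu, _, rfl⟩
      exact ⟨u, hu.1, rfl⟩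
  -- clade union of treeNodeOf = leaves below
  have h_cu : ∀ w ∈ nodes,
      cladeUnion (treeNodeOf nodes edges lab w) = leavesBelow nodes edges lab w := by
    intro w hw
    simp only [treeNodeOf]
    by_cases hch : ∃ c, (w, c) ∈ edges
    · obtain ⟨c0, hc0⟩ := hch
      have hne : {C | ∃ w', (w, w') ∈ edges ∧ C = leavesBelow nodes edges lab w'} ≠ ∅ :=
        Set.nonempty_iff_ne_empty.mp ⟨_, c0, hc0, rfl⟩
      rw [cu_node_ne _ hne]
      ext y
      constructor
      · rintro ⟨C, ⟨c, hc, rfl⟩, hy⟩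
        exact h_lb_mono (Relation.ReflTransGen.single hc) hy
      · rintro ⟨u, hu, hr, rfl⟩
        rcases Relation.ReflTransGen.cases_head hr with heq | ⟨c, hc, hcu⟩
        · rw [← heq] at hu
          exact absurd hc0 (hu.2 c0)
        · exact ⟨leavesBelow nodes edges lab c, ⟨c, hc, rfl⟩, ⟨u, hu, hcu, rfl⟩⟩
    · push_neg at hch
      have hem : {C | ∃ w', (w, w') ∈ edges ∧ C = leavesBelow nodes edges lab w'} = ∅ := by
        ext C
        simp only [Set.mem_setOf_eq, Set.mem_empty_iff_false, iff_false, not_exists]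
        intro w' hw'
        exact absurd hw'.1 (hch w')
      rw [hem, cu_node_empty]
      ext y
      constructor
      · intro hy
        rw [Set.mem_singleton_iff] at hy
        subst hy
        exact ⟨w, ⟨hw, hch⟩, Relation.ReflTransGen.refl, rfl⟩
      · rintro ⟨u, hu, hr, rfl⟩
        rcases Relation.ReflTransGen.cases_head hr with heq | ⟨c, hc, _⟩
        · rw [heq]; rfl
        · exact absurd hc (hch c)
  -- injectivity of treeNodeOf on nodes
  have h_key : ∀ {w1 w2 : α}, w1 ∈ nodes → w2 ∈ nodes → GReach edges w1 w2 → w1 ≠ w2 →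
      treeNodeOf nodes edges lab w1 ≠ treeNodeOf nodes edges lab w2 := by
    intro w1 w2 h1 h2 hr hne heq
    rcases Relation.ReflTransGen.cases_head hr with heqw | ⟨c, hc, hcr⟩
    · exact hne heqw
    · obtain ⟨c', hc', hcne⟩ := h_two h1 hc
      have hCS : ({C | ∃ w', (w1, w') ∈ edges ∧ C = leavesBelow nodes edges lab w'} :
          Set (Set Y)) = {C | ∃ w', (w2, w') ∈ edges ∧ C = leavesBelow nodes edges lab w'} := by
        have h := heq
        simp only [treeNodeOf, HNode.node.injEq] at h
        exact h.2
      have hmem : leavesBelow nodes edges lab c' ∈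
          {C | ∃ w', (w2, w') ∈ edges ∧ C = leavesBelow nodes edges lab w'} := by
        rw [← hCS]; exact ⟨c', hc', rfl⟩
      obtain ⟨d, hd, hdeq⟩ := hmem
      obtain ⟨y, hy⟩ := h_lb_ne d (hT.edge_mem _ hd).2
      have hy1 : y ∈ leavesBelow nodes edges lab c' := by rw [hdeq]; exact hy
      have hy2 : y ∈ leavesBelow nodes edges lab c :=
        h_lb_mono (hcr.trans (Relation.ReflTransGen.single hd)) hy
      exact Set.disjoint_left.mp (h_sib_disj hc' hc hcne) hy1 hy2
  have h_inj : Set.InjOn (treeNodeOf nodes edges lab) nodes := by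
    intro w1 h1 w2 h2 heq
    by_contra hne
    by_cases hch : ∃ c, (w1, c) ∈ edges
    · have hlb : leavesBelow nodes edges lab w1 = leavesBelow nodes edges lab w2 := by
        rw [← h_cu w1 h1, ← h_cu w2 h2, heq]
      obtain ⟨y, hy⟩ := h_lb_ne w1 h1
      obtain ⟨u1, hu1, hr1, hye1⟩ := hy
      have hy2 : y ∈ leavesBelow nodes edges lab w2 := by rw [← hlb]; exact ⟨u1, hu1, hr1, hye1⟩
      obtain ⟨u2, hu2, hr2, hye2⟩ := hy2
      have hu12 : u2 = u1 := hT.leaf_inj u2 u1 hu2 hu1 (hye2.symm.trans hye1)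
      subst hu12
      rcases h_comp hr1 w2 hr2 with h | h
      · exact h_key h1 h2 h hne heq
      · exact h_key h2 h1 h (Ne.symm hne) heq.symm
    · push_neg at hch
      have hl : lab w1 = lab w2 ∧
          ({C | ∃ w', (w1, w') ∈ edges ∧ C = leavesBelow nodes edges lab w'} : Set (Set Y)) =
          {C | ∃ w', (w2, w') ∈ edges ∧ C = leavesBelow nodes edges lab w'} := by
        have h := heq
        simp only [treeNodeOf, HNode.node.injEq] at h
        exact h
      have hch2 : ∀ c, (w2, c) ∉ edges := by
        intro c hc
        have : leavesBelow nodes edges lab c ∈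
            {C | ∃ w', (w1, w') ∈ edges ∧ C = leavesBelow nodes edges lab w'} := by
          rw [hl.2]; exact ⟨c, hc, rfl⟩
        obtain ⟨w', hw', _⟩ := this
        exact hch w' hw'
      exact hne (hT.leaf_inj w1 w2 ⟨h1, hch⟩ ⟨h2, hch2⟩ hl.1)
  have h_tno_ne : ∀ w, treeNodeOf nodes edges lab w ≠ HNode.ua :=
    fun w h => node_ne_ua _ _ h
  have hEmem2 : ∀ {a b : α}, (a, b) ∈ edges →
      (treeNodeOf nodes edges lab a, treeNodeOf nodes edges lab b) ∈
        treeToHistE nodes edges root lab :=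
    fun h => Set.mem_insert_iff.mpr (Or.inr ⟨_, _, h, rfl⟩)
  have hV_sub : treeToHistV nodes edges lab ⊆ completeV Y := by
    rintro v hv
    rcases Set.mem_insert_iff.mp hv with rfl | ⟨w, hw, rfl⟩
    · exact Or.inl rfl
    · exact Or.inr ⟨lab w, _, rfl, h_isPart w hw⟩
  have hE_sub : treeToHistE nodes edges root lab ⊆ completeE Y := by
    rintro e he
    rcases Set.mem_insert_iff.mp he with rfl | ⟨a, b, hab, rfl⟩
    · exact ⟨Or.inl rfl, hV_sub (Set.mem_insert_iff.mpr (Or.inr ⟨root, hT.root_mem, rfl⟩)),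
        h_tno_ne root, Or.inl rfl⟩
    · refine ⟨hV_sub (Set.mem_insert_iff.mpr (Or.inr ⟨a, (hT.edge_mem _ hab).1, rfl⟩)),
        hV_sub (Set.mem_insert_iff.mpr (Or.inr ⟨b, (hT.edge_mem _ hab).2, rfl⟩)),
        h_tno_ne b, Or.inr ⟨lab a, _, rfl, ?_⟩⟩
      rw [h_cu b (hT.edge_mem _ hab).2]
      exact ⟨b, hab, rfl⟩
  have h_map_reach : ∀ {w x : α}, GReach edges w x →
      Reach (treeToHistE nodes edges root lab)
        (treeNodeOf nodes edges lab w) (treeNodeOf nodes edges lab x) := by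
    intro w x h
    induction h with
    | refl => exact Relation.ReflTransGen.refl
    | tail hm he ih => exact ih.tail (hEmem2 he)
  refine ⟨⟨hV_sub, hE_sub, ⟨?_, ?_, ?_⟩⟩, ?_⟩
  · -- IsHSDAG
    refine ⟨Set.mem_insert _ _, ?_, ?_, ?_, ?_, ?_, ?_⟩
    · intro ℓ U h
      rcases Set.mem_insert_iff.mp h with h | ⟨w, hw, heq⟩
      · exact absurd h (node_ne_ua ℓ U)
      · simp only [treeNodeOf, HNode.node.injEq] at heq
        rw [← heq.2]
        exact h_isPart w hw
    · intro e he
      rcases Set.mem_insert_iff.mp he with rfl | ⟨a, b, hab, rfl⟩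
      · exact ⟨Set.mem_insert _ _,
          Set.mem_insert_iff.mpr (Or.inr ⟨root, hT.root_mem, rfl⟩)⟩
      · exact ⟨Set.mem_insert_iff.mpr (Or.inr ⟨a, (hT.edge_mem _ hab).1, rfl⟩),
          Set.mem_insert_iff.mpr (Or.inr ⟨b, (hT.edge_mem _ hab).2, rfl⟩)⟩
    · intro v hv
      rcases Set.mem_insert_iff.mp hv with rfl | ⟨w, hw, rfl⟩
      · exact Relation.ReflTransGen.refl
      · exact Relation.ReflTransGen.head (Set.mem_insert _ _)
          (h_map_reach (hT.reach_root w hw))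
    · intro v hv
      rcases Set.mem_insert_iff.mp hv with h | ⟨a, b, hab, heq⟩
      · exact h_tno_ne root (Prod.ext_iff.mp h).2.symm
      · exact h_tno_ne b (Prod.ext_iff.mp heq).2.symm
    · intro ℓ U v he
      rcases Set.mem_insert_iff.mp he with h | ⟨a, b, hab, heq⟩
      · exact absurd (Prod.ext_iff.mp h).1 (node_ne_ua ℓ U)
      · have h1 : treeNodeOf nodes edges lab a = HNode.node ℓ U :=
          (Prod.ext_iff.mp heq).1.symm
        have h2 : v = treeNodeOf nodes edges lab b := (Prod.ext_iff.mp heq).2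
        simp only [treeNodeOf, HNode.node.injEq] at h1
        rw [← h1.2, h2, h_cu b (hT.edge_mem _ hab).2]
        exact ⟨b, hab, rfl⟩
    · intro ℓ U hUV C hC
      rcases Set.mem_insert_iff.mp hUV with h | ⟨w, hw, heq⟩
      · exact absurd h (node_ne_ua ℓ U)
      · have heq' := heq
        simp only [treeNodeOf, HNode.node.injEq] at heq'
        rw [← heq'.2] at hC
        obtain ⟨w', hww', hCeq⟩ := hC
        refine ⟨treeNodeOf nodes edges lab w', ?_, ?_⟩
        · rw [← heq]; exact hEmem2 hww'
        · rw [h_cu w' (hT.edge_mem _ hww').2]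
          exact hCeq.symm
  · -- unique child of UA
    refine ⟨treeNodeOf nodes edges lab root, Set.mem_insert _ _, ?_⟩
    rintro v hv
    rcases Set.mem_insert_iff.mp hv with h | ⟨a, b, hab, heq⟩
    · exact (Prod.ext_iff.mp h).2
    · exact absurd (Prod.ext_iff.mp heq).1.symm (h_tno_ne a)
  · -- unique descendant edges
    intro ℓ U hUV C hC
    rcases Set.mem_insert_iff.mp hUV with h | ⟨w, hw, heq⟩
    · exact absurd h (node_ne_ua ℓ U)
    · have heq' := heq
      simp only [treeNodeOf, HNode.node.injEq] at heq'
      rw [← heq'.2] at hC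
      obtain ⟨w', hww', hCeq⟩ := hC
      refine ⟨treeNodeOf nodes edges lab w', ⟨?_, ?_⟩, ?_⟩
      · rw [← heq]; exact hEmem2 hww'
      · rw [h_cu w' (hT.edge_mem _ hww').2]
        exact hCeq.symm
      · rintro vc ⟨hvc, hcu⟩
        rcases Set.mem_insert_iff.mp hvc with h | ⟨a, b, hab, heq2⟩
        · exact absurd (Prod.ext_iff.mp h).1 (node_ne_ua ℓ U)
        · have ha : treeNodeOf nodes edges lab a = treeNodeOf nodes edges lab w :=
            (Prod.ext_iff.mp heq2).1.symm.trans heq.symm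
          have haw : a = w := h_inj (hT.edge_mem _ hab).1 hw ha
          subst haw
          have hb : vc = treeNodeOf nodes edges lab b := (Prod.ext_iff.mp heq2).2
          have hlb : leavesBelow nodes edges lab b = leavesBelow nodes edges lab w' := by
            rw [← h_cu b (hT.edge_mem _ hab).2, ← hb, hcu, hCeq]
          by_cases hbw : b = w'
          · rw [hb, hbw]
          · exfalso
            obtain ⟨y, hy⟩ := h_lb_ne b (hT.edge_mem _ hab).2
            have hy' : y ∈ leavesBelow nodes edges lab w' := by rw [← hlb]; exact hy
            exact Set.disjoint_left.mp (h_sib_disj hab hww' hbw) hy hy'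
  · -- the isomorphism
    refine ⟨treeNodeOf nodes edges lab, ⟨?_, h_inj, ?_⟩, ?_, ?_⟩
    · intro w hw
      exact ⟨Set.mem_insert_iff.mpr (Or.inr ⟨w, hw, rfl⟩), h_tno_ne w⟩
    · intro v hv
      rcases Set.mem_insert_iff.mp hv.1 with h | ⟨w, hw, rfl⟩
      · exact absurd h hv.2
      · exact ⟨w, hw, rfl⟩
    · intro w _
      exact hlab' (lab w) _
    · ext e
      simp only [Set.mem_setOf_eq, Set.mem_sep_iff]
      constructor
      · rintro ⟨he, hne⟩
        rcases Set.mem_insert_iff.mp he with h | ⟨a, b, hab, rfl⟩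
        · exact absurd ((Prod.ext_iff.mp h).1) hne
        · exact ⟨a, b, hab, rfl⟩
      · rintro ⟨a, b, hab, rfl⟩
        exact ⟨Set.mem_insert_iff.mpr (Or.inr ⟨a, b, hab, rfl⟩), h_tno_ne a⟩

end CorrespondenceAux

/-- Lemma `correspondence_bijection`: the history-to-tree and
tree-to-history maps are mutually inverse up to label-preserving isomorphism, giving a
bijective correspondence between histories in the complete history sDAG on labels `Y` and
isomorphism classes of internally labeled trees with labels in `Y`. -/
theorem correspondence_bijection {α : Type v}
    (lab' : HNode Y → Y) (hlab' : ∀ ℓ U, lab' (HNode.node ℓ U) = ℓ) :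
    -- history → tree → history recovers the original history
    (∀ (Vt : Set (HNode Y)) (Et : Set (HNode Y × HNode Y)) (r : HNode Y),
      HistoryIn (completeV Y) (completeE Y) Vt Et → (HNode.ua, r) ∈ Et →
        treeToHistV (Vt \ {HNode.ua}) (Et \ {(HNode.ua, r)}) lab' = Vt ∧
        treeToHistE (Vt \ {HNode.ua}) (Et \ {(HNode.ua, r)}) r lab' = Et) ∧
    -- tree → history → tree recovers a labeled tree isomorphic to the original,
    -- and the associated history is a history in the complete history sDAG
    (∀ (nodes : Set α) (edges : Set (α × α)) (root : α) (lab : α → Y),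
      IsLabeledTree nodes edges root lab →
        HistoryIn (completeV Y) (completeE Y)
          (treeToHistV nodes edges lab) (treeToHistE nodes edges root lab) ∧
        ∃ h : α → HNode Y,
          Set.BijOn h nodes (treeToHistV nodes edges lab \ {HNode.ua}) ∧
          (∀ w ∈ nodes, lab' (h w) = lab w) ∧
          {e ∈ treeToHistE nodes edges root lab | e.1 ≠ HNode.ua} =
            {e | ∃ a b, (a, b) ∈ edges ∧ e = (h a, h b)}) := by
  constructor
  · intro Vt Et r hH hr
    exact part1 lab' hlab' Vt Et r hH.2.2 hr
  · intro nodes edges root lab hT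
    exact part2 lab' hlab' nodes edges root lab hT

end HistorySDAGs
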